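/- For γ ∈ (-1/2, 1] there exist constants c₁(γ), c₂(γ) > 0 such that for all η ∈ ℝ, c₁(γ)(1+η^2)^{-γ} ≤ ∫_ℝ (1+u^2)^{-γ}(1+(η-u)^2)^{-1} du ≤ c₂(γ)(1+η^2)^{-γ}. -/

import Mathlib

open MeasureTheory Real Set

lemma my_int {s : ℝ} (hs : 1/2 < s) : Integrable (fun u : ℝ => (1 + u ^ 2) ^ (-s)) := by
  have h := integrable_rpow_neg_one_add_norm_sq (E := ℝ) (μ := volume) (r := 2 * s)
    (by simp; linarith)
  have e : (fun u : ℝ => (1 + ‖u‖ ^ 2) ^ (-(2*s)/2)) = (fun u : ℝ => (1 + u ^ 2) ^ (-s)) := by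
    funext u; rw [Real.norm_eq_abs, sq_abs, show -(2*s)/2 = -s by ring]
  rwa [e] at h

lemma my_shift_int {t : ℝ} (ht : t < -(1/2)) (η : ℝ) :
    Integrable (fun u : ℝ => (1 + (η - u) ^ 2) ^ t) := by
  have h : Integrable (fun v : ℝ => (1 + v ^ 2) ^ t) := by
    have := my_int (s := -t) (by linarith)
    simpa using this
  exact h.comp_sub_left η

lemma my_shift_eq (t : ℝ) (η : ℝ) :
    (∫ u : ℝ, (1 + (η - u) ^ 2) ^ t) = ∫ v : ℝ, (1 + v ^ 2) ^ t :=
  integral_sub_left_eq_self (fun v : ℝ => (1 + v ^ 2) ^ t) volume η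

lemma my_cauchy_shift (η : ℝ) : (∫ u : ℝ, (1 + (η - u) ^ 2)⁻¹) = π := by
  rw [integral_sub_left_eq_self (fun v : ℝ => (1 + v ^ 2)⁻¹) volume η]
  exact integral_univ_inv_one_add_sq

lemma my_cauchy_shift_int (η : ℝ) : Integrable (fun u : ℝ => (1 + (η - u) ^ 2)⁻¹) :=
  integrable_inv_one_add_sq.comp_sub_left η

lemma key_ineq {x y z s : ℝ} (hx : 0 < x) (hy : 0 < y) (hz : 0 < z) (hs : 0 ≤ s)
    (h : z ≤ 2 * x * y) : x ^ (-s) ≤ 2 ^ s * z ^ (-s) * y ^ s := by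
  have h1 : z ^ s ≤ 2 ^ s * x ^ s * y ^ s := by
    calc z ^ s ≤ (2 * x * y) ^ s := Real.rpow_le_rpow hz.le h hs
    _ = 2 ^ s * x ^ s * y ^ s := by
        rw [Real.mul_rpow (by positivity) hy.le, Real.mul_rpow (by norm_num) hx.le]
  have hxs : (0:ℝ) < x ^ s := Real.rpow_pos_of_pos hx s
  have hzs : (0:ℝ) < z ^ s := Real.rpow_pos_of_pos hz s
  rw [Real.rpow_neg hx.le, Real.rpow_neg hz.le]
  rw [inv_le_iff_one_le_mul₀ hxs, show 2 ^ s * (z ^ s)⁻¹ * y ^ s * x ^ s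
    = (2 ^ s * x ^ s * y ^ s) * (z ^ s)⁻¹ by ring]
  have := mul_le_mul_of_nonneg_right h1 (inv_nonneg.mpr hzs.le)
  simpa [mul_inv_cancel₀ hzs.ne'] using this

lemma ratio_low {x z γ : ℝ} (hx : 0 < x) (hz : 0 < z) (hγ1 : -1 ≤ γ) (hγ2 : γ ≤ 1)
    (h1 : z ≤ 3 * x) (h2 : x ≤ 3 * z) : (1/3) * z ^ (-γ) ≤ x ^ (-γ) := by
  have hzg : (0:ℝ) < z ^ (-γ) := Real.rpow_pos_of_pos hz _
  rcases le_or_gt 0 γ with hg | hg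
  · have A : (3*z) ^ (-γ) ≤ x ^ (-γ) := Real.rpow_le_rpow_of_nonpos hx h2 (by linarith)
    have B : (3:ℝ)^(-γ) * z^(-γ) = (3*z)^(-γ) := (Real.mul_rpow (by norm_num) hz.le).symm
    have C : (1/3:ℝ) ≤ (3:ℝ)^(-γ) := by
      calc (1/3:ℝ) = (3:ℝ)^(-1:ℝ) := by rw [Real.rpow_neg_one]; norm_num
      _ ≤ 3^(-γ) := Real.rpow_le_rpow_of_exponent_le (by norm_num) (by linarith)
    calc (1/3) * z^(-γ) ≤ 3^(-γ) * z^(-γ) := mul_le_mul_of_nonneg_right C hzg.le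
    _ = (3*z)^(-γ) := B
    _ ≤ x^(-γ) := A
  · have h3 : z/3 ≤ x := by linarith
    have A : (z/3) ^ (-γ) ≤ x ^ (-γ) := Real.rpow_le_rpow (by positivity) h3 (by linarith)
    have B : (z/3)^(-γ) = z^(-γ) / 3^(-γ) := Real.div_rpow hz.le (by norm_num : (0:ℝ) ≤ 3) (-γ)
    have C : (3:ℝ)^(-γ) ≤ 3 := by
      calc (3:ℝ)^(-γ) ≤ (3:ℝ)^(1:ℝ) :=
        Real.rpow_le_rpow_of_exponent_le (by norm_num) (by linarith)
      _ = 3 := Real.rpow_one 3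
    have D : (0:ℝ) < (3:ℝ)^(-γ) := Real.rpow_pos_of_pos (by norm_num) _
    calc (1/3) * z^(-γ) = z^(-γ)/3 := by ring
    _ ≤ z^(-γ)/3^(-γ) := div_le_div_of_nonneg_left hzg.le D C
    _ = (z/3)^(-γ) := B.symm
    _ ≤ x^(-γ) := A

lemma my_cont (γ : ℝ) : Continuous (fun u : ℝ => (1 + u ^ 2) ^ (-γ)) := by
  apply Continuous.rpow_const (by continuity)
  intro u; left; positivity

lemma my_cont2 (γ η : ℝ) :
    Continuous (fun u : ℝ => (1 + u ^ 2) ^ (-γ) * (1 + (η - u) ^ 2)⁻¹) := by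
  apply Continuous.mul (my_cont γ)
  apply Continuous.inv₀ (by continuity)
  intro u; positivity

-- case γ < 1/2 of the upper bound
lemma my_upper_low (γ : ℝ) (hγl : -(1/2) < γ) (hhalf : γ < 1/2) :
    ∃ C : ℝ, 0 < C ∧ ∀ η : ℝ,
      Integrable (fun u : ℝ => (1 + u ^ 2) ^ (-γ) * (1 + (η - u) ^ 2)⁻¹) ∧
      (∫ u : ℝ, (1 + u ^ 2) ^ (-γ) * (1 + (η - u) ^ 2)⁻¹) ≤ C * (1 + η ^ 2) ^ (-γ) := by
  have habs : |γ| < 1/2 := abs_lt.mpr ⟨by linarith, hhalf⟩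
  set t : ℝ := |γ| - 1 with ht_def
  have ht : t < -(1/2) := by simp only [ht_def]; linarith
  set I : ℝ := ∫ v : ℝ, (1 + v ^ 2) ^ t with hI_def
  have hI : 0 ≤ I := integral_nonneg fun v => Real.rpow_nonneg (by positivity) _
  refine ⟨2 ^ |γ| * I + 1, by positivity, fun η => ?_⟩
  have hz : (0:ℝ) < 1 + η ^ 2 := by positivity
  have hzg : (0:ℝ) < (1 + η ^ 2) ^ (-γ) := Real.rpow_pos_of_pos hz _
  -- pointwise bound
  have hbound : ∀ u : ℝ, (1 + u ^ 2) ^ (-γ) * (1 + (η - u) ^ 2)⁻¹ ≤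
      (2 ^ |γ| * (1 + η ^ 2) ^ (-γ)) * (1 + (η - u) ^ 2) ^ t := by
    intro u
    have hx : (0:ℝ) < 1 + u ^ 2 := by positivity
    have hy : (0:ℝ) < 1 + (η - u) ^ 2 := by positivity
    have hstep : (1 + u ^ 2) ^ (-γ) ≤
        2 ^ |γ| * (1 + η ^ 2) ^ (-γ) * (1 + (η - u) ^ 2) ^ |γ| := by
      rcases le_or_gt 0 γ with hg | hg
      · rw [abs_of_nonneg hg]
        exact key_ineq hx hy hz hg (by nlinarith [sq_nonneg (u - (η - u)), mul_nonneg (sq_nonneg u) (sq_nonneg (η - u))])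
      · rw [abs_of_neg hg]
        have h2 : 1 + u ^ 2 ≤ 2 * (1 + η ^ 2) * (1 + (η - u) ^ 2) := by
          nlinarith [sq_nonneg (η + (η - u)), mul_nonneg (sq_nonneg η) (sq_nonneg (η - u))]
        have : (1 + u ^ 2) ^ (-γ) ≤ (2 * (1 + η ^ 2) * (1 + (η - u) ^ 2)) ^ (-γ) :=
          Real.rpow_le_rpow hx.le h2 (by linarith)
        calc (1 + u ^ 2) ^ (-γ) ≤ (2 * (1 + η ^ 2) * (1 + (η - u) ^ 2)) ^ (-γ) := this
        _ = 2 ^ (-γ) * (1 + η ^ 2) ^ (-γ) * (1 + (η - u) ^ 2) ^ (-γ) := by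
            rw [Real.mul_rpow (by positivity) hy.le, Real.mul_rpow (by norm_num) hz.le]
    have hyinv : (1 + (η - u) ^ 2)⁻¹ = (1 + (η - u) ^ 2) ^ (-1 : ℝ) :=
      (Real.rpow_neg_one _).symm
    calc (1 + u ^ 2) ^ (-γ) * (1 + (η - u) ^ 2)⁻¹
        ≤ (2 ^ |γ| * (1 + η ^ 2) ^ (-γ) * (1 + (η - u) ^ 2) ^ |γ|) * (1 + (η - u) ^ 2)⁻¹ := by
          apply mul_le_mul_of_nonneg_right hstep (by positivity)
    _ = (2 ^ |γ| * (1 + η ^ 2) ^ (-γ)) * ((1 + (η - u) ^ 2) ^ |γ| * (1 + (η-u)^2) ^ (-1:ℝ)) := by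
          rw [hyinv]; ring
    _ = (2 ^ |γ| * (1 + η ^ 2) ^ (-γ)) * (1 + (η - u) ^ 2) ^ t := by
          rw [← Real.rpow_add hy, show |γ| + (-1:ℝ) = t by rw [ht_def]; ring]
  have hgint : Integrable (fun u : ℝ =>
      (2 ^ |γ| * (1 + η ^ 2) ^ (-γ)) * (1 + (η - u) ^ 2) ^ t) :=
    (my_shift_int ht η).const_mul _
  have hnn : ∀ u : ℝ, 0 ≤ (1 + u ^ 2) ^ (-γ) * (1 + (η - u) ^ 2)⁻¹ := fun u => by positivity
  have hfint : Integrable (fun u : ℝ => (1 + u ^ 2) ^ (-γ) * (1 + (η - u) ^ 2)⁻¹) := by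
    refine hgint.mono' (my_cont2 γ η).aestronglyMeasurable (ae_of_all _ fun u => ?_)
    rw [Real.norm_eq_abs, abs_of_nonneg (hnn u)]
    exact hbound u
  refine ⟨hfint, ?_⟩
  calc (∫ u : ℝ, (1 + u ^ 2) ^ (-γ) * (1 + (η - u) ^ 2)⁻¹)
      ≤ ∫ u : ℝ, (2 ^ |γ| * (1 + η ^ 2) ^ (-γ)) * (1 + (η - u) ^ 2) ^ t :=
        integral_mono_of_nonneg (ae_of_all _ hnn) hgint (ae_of_all _ hbound)
  _ = (2 ^ |γ| * (1 + η ^ 2) ^ (-γ)) * ∫ u : ℝ, (1 + (η - u) ^ 2) ^ t :=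
        integral_const_mul _ _
  _ = (2 ^ |γ| * I) * (1 + η ^ 2) ^ (-γ) := by rw [my_shift_eq t η, ← hI_def]; ring
  _ ≤ (2 ^ |γ| * I + 1) * (1 + η ^ 2) ^ (-γ) := by
        apply mul_le_mul_of_nonneg_right (by linarith) hzg.le

lemma my_upper_high (γ : ℝ) (hγu : γ ≤ 1) (hhalf : 1/2 ≤ γ) :
    ∃ C : ℝ, 0 < C ∧ ∀ η : ℝ,
      Integrable (fun u : ℝ => (1 + u ^ 2) ^ (-γ) * (1 + (η - u) ^ 2)⁻¹) ∧
      (∫ u : ℝ, (1 + u ^ 2) ^ (-γ) * (1 + (η - u) ^ 2)⁻¹) ≤ C * (1 + η ^ 2) ^ (-γ) := by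
  have hg0 : (0:ℝ) ≤ γ := by linarith
  have hJint : ∀ η : ℝ, IntegrableOn (fun u : ℝ => (1 + u ^ 2) ^ (-γ))
      (Ioo (-(|η|/2)) (|η|/2)) := fun η =>
    ((my_cont γ).integrableOn_Icc).mono_set Ioo_subset_Icc_self
  have hJnn : ∀ η : ℝ, 0 ≤ ∫ u in Ioo (-(|η|/2)) (|η|/2), (1 + u ^ 2) ^ (-γ) := fun η =>
    setIntegral_nonneg measurableSet_Ioo fun u _ => Real.rpow_nonneg (by positivity) _
  have hJK : ∃ K : ℝ, 0 < K ∧ ∀ η : ℝ,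
      (∫ u in Ioo (-(|η|/2)) (|η|/2), (1 + u ^ 2) ^ (-γ)) * (1 + η ^ 2)⁻¹ ≤
        K * (1 + η ^ 2) ^ (-γ) := by
    rcases eq_or_lt_of_le hhalf with heq | hlt
    · refine ⟨1, one_pos, fun η => ?_⟩
      have hz : (0:ℝ) < 1 + η ^ 2 := by positivity
      have hJ1 : (∫ u in Ioo (-(|η|/2)) (|η|/2), (1 + u ^ 2) ^ (-γ)) ≤ |η| := by
        calc (∫ u in Ioo (-(|η|/2)) (|η|/2), (1 + u ^ 2) ^ (-γ))
            ≤ ∫ _u in Ioo (-(|η|/2)) (|η|/2), (1:ℝ) := by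
              refine setIntegral_mono_on (hJint η) ?_ measurableSet_Ioo fun u _ =>
                Real.rpow_le_one_of_one_le_of_nonpos (by nlinarith [sq_nonneg u]) (by linarith)
              refine (integrableOn_const_iff enorm_ne_top).mpr (Or.inr ?_)
              rw [Real.volume_Ioo]; exact ENNReal.ofReal_lt_top
        _ = |η| := by
              rw [setIntegral_const, smul_eq_mul, mul_one, measureReal_def, Real.volume_Ioo,
                show |η|/2 - -(|η|/2) = |η| by ring, ENNReal.toReal_ofReal (abs_nonneg η)]
      have hηz : |η| ≤ (1 + η ^ 2) ^ (1/2 : ℝ) := by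
        rw [← Real.sqrt_eq_rpow]
        calc |η| = Real.sqrt (η ^ 2) := (Real.sqrt_sq_eq_abs η).symm
        _ ≤ Real.sqrt (1 + η ^ 2) := Real.sqrt_le_sqrt (by linarith)
      calc (∫ u in Ioo (-(|η|/2)) (|η|/2), (1 + u ^ 2) ^ (-γ)) * (1 + η ^ 2)⁻¹
          ≤ (1 + η ^ 2) ^ (1/2 : ℝ) * (1 + η ^ 2)⁻¹ :=
            mul_le_mul_of_nonneg_right (hJ1.trans hηz) (inv_nonneg.mpr hz.le)
      _ = (1 + η ^ 2) ^ (1/2 : ℝ) * (1 + η ^ 2) ^ (-1 : ℝ) := by rw [Real.rpow_neg_one]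
      _ = (1 + η ^ 2) ^ (-γ) := by
            rw [← Real.rpow_add hz, show (1/2 : ℝ) + -1 = -γ by rw [← heq]; norm_num]
      _ = 1 * (1 + η ^ 2) ^ (-γ) := (one_mul _).symm
    · have hIγ := my_int hlt
      have hIγnn : 0 ≤ ∫ u : ℝ, (1 + u ^ 2) ^ (-γ) :=
        integral_nonneg fun u => Real.rpow_nonneg (by positivity) _
      refine ⟨(∫ u : ℝ, (1 + u ^ 2) ^ (-γ)) + 1, by positivity, fun η => ?_⟩
      have hz : (0:ℝ) < 1 + η ^ 2 := by positivity
      have hJle : (∫ u in Ioo (-(|η|/2)) (|η|/2), (1 + u ^ 2) ^ (-γ)) ≤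
          ∫ u : ℝ, (1 + u ^ 2) ^ (-γ) :=
        setIntegral_le_integral hIγ (ae_of_all _ fun u => Real.rpow_nonneg (by positivity) _)
      have hzinv : (1 + η ^ 2)⁻¹ ≤ (1 + η ^ 2) ^ (-γ) := by
        rw [← Real.rpow_neg_one]
        exact Real.rpow_le_rpow_of_exponent_le (by nlinarith [sq_nonneg η]) (by linarith)
      calc (∫ u in Ioo (-(|η|/2)) (|η|/2), (1 + u ^ 2) ^ (-γ)) * (1 + η ^ 2)⁻¹
          ≤ (∫ u : ℝ, (1 + u ^ 2) ^ (-γ)) * (1 + η ^ 2) ^ (-γ) :=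
            mul_le_mul hJle hzinv (inv_nonneg.mpr hz.le) hIγnn
      _ ≤ ((∫ u : ℝ, (1 + u ^ 2) ^ (-γ)) + 1) * (1 + η ^ 2) ^ (-γ) :=
            mul_le_mul_of_nonneg_right (by linarith) (Real.rpow_pos_of_pos hz _).le
  obtain ⟨K, hK, hJ⟩ := hJK
  have hπ := Real.pi_pos
  refine ⟨4 ^ γ * π + 4 * K, by positivity, fun η => ?_⟩
  have hz : (0:ℝ) < 1 + η ^ 2 := by positivity
  have hzg : (0:ℝ) < (1 + η ^ 2) ^ (-γ) := Real.rpow_pos_of_pos hz _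
  have hgAint : Integrable (fun u : ℝ => (4 ^ γ * (1 + η ^ 2) ^ (-γ)) * (1 + (η - u) ^ 2)⁻¹) :=
    (my_cauchy_shift_int η).const_mul _
  have hgBOn : IntegrableOn (fun u : ℝ => (4 * (1 + η ^ 2)⁻¹) * (1 + u ^ 2) ^ (-γ))
      (Ioo (-(|η|/2)) (|η|/2)) := (hJint η).const_mul _
  have hgBint : Integrable ((Ioo (-(|η|/2)) (|η|/2)).indicator
      (fun u : ℝ => (4 * (1 + η ^ 2)⁻¹) * (1 + u ^ 2) ^ (-γ))) :=
    hgBOn.integrable_indicator measurableSet_Ioo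
  have hgBnn : ∀ u : ℝ, 0 ≤ (Ioo (-(|η|/2)) (|η|/2)).indicator
      (fun u : ℝ => (4 * (1 + η ^ 2)⁻¹) * (1 + u ^ 2) ^ (-γ)) u := fun u =>
    Set.indicator_nonneg (fun v _ => by positivity) u
  -- pointwise bound
  have hpt : ∀ u : ℝ, (1 + u ^ 2) ^ (-γ) * (1 + (η - u) ^ 2)⁻¹ ≤
      (4 ^ γ * (1 + η ^ 2) ^ (-γ)) * (1 + (η - u) ^ 2)⁻¹ +
      (Ioo (-(|η|/2)) (|η|/2)).indicator
        (fun u : ℝ => (4 * (1 + η ^ 2)⁻¹) * (1 + u ^ 2) ^ (-γ)) u := by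
    intro u
    have hx : (0:ℝ) < 1 + u ^ 2 := by positivity
    have hy : (0:ℝ) < 1 + (η - u) ^ 2 := by positivity
    by_cases hu : u ∈ Ioo (-(|η|/2)) (|η|/2)
    · rw [Set.indicator_of_mem hu]
      have habs : |u| < |η|/2 := abs_lt.mpr ⟨hu.1, hu.2⟩
      have htri : |η| ≤ |η - u| + |u| := by
        calc |η| = |(η - u) + u| := by rw [sub_add_cancel]
        _ ≤ |η - u| + |u| := abs_add_le _ _
      have h5 : |η|/2 ≤ |η - u| := by linarith
      have hsq : η ^ 2 / 4 ≤ (η - u) ^ 2 := by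
        nlinarith [h5, abs_nonneg η, sq_abs η, sq_abs (η - u)]
      have h4 : (1 + η ^ 2) / 4 ≤ 1 + (η - u) ^ 2 := by linarith
      have hyi : (1 + (η - u) ^ 2)⁻¹ ≤ 4 * (1 + η ^ 2)⁻¹ := by
        calc (1 + (η - u) ^ 2)⁻¹ ≤ ((1 + η ^ 2) / 4)⁻¹ := inv_anti₀ (by positivity) h4
        _ = 4 * (1 + η ^ 2)⁻¹ := by rw [inv_div]; ring
      have hfB : (1 + u ^ 2) ^ (-γ) * (1 + (η - u) ^ 2)⁻¹ ≤
          (4 * (1 + η ^ 2)⁻¹) * (1 + u ^ 2) ^ (-γ) := by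
        calc (1 + u ^ 2) ^ (-γ) * (1 + (η - u) ^ 2)⁻¹
            ≤ (1 + u ^ 2) ^ (-γ) * (4 * (1 + η ^ 2)⁻¹) :=
              mul_le_mul_of_nonneg_left hyi (Real.rpow_nonneg hx.le _)
        _ = (4 * (1 + η ^ 2)⁻¹) * (1 + u ^ 2) ^ (-γ) := by ring
      have : (0:ℝ) ≤ (4 ^ γ * (1 + η ^ 2) ^ (-γ)) * (1 + (η - u) ^ 2)⁻¹ := by positivity
      linarith
    · rw [Set.indicator_of_notMem hu]
      rw [Set.mem_Ioo, not_and_or] at hu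
      have hu2 : η ^ 2 / 4 ≤ u ^ 2 := by
        rcases hu with h | h
        · push_neg at h
          nlinarith [abs_nonneg η, sq_abs η]
        · push_neg at h
          nlinarith [abs_nonneg η, sq_abs η]
      have hx4 : (1 + η ^ 2) / 4 ≤ 1 + u ^ 2 := by linarith
      have hstep : (1 + u ^ 2) ^ (-γ) ≤ 4 ^ γ * (1 + η ^ 2) ^ (-γ) := by
        calc (1 + u ^ 2) ^ (-γ) ≤ ((1 + η ^ 2) / 4) ^ (-γ) :=
              Real.rpow_le_rpow_of_nonpos (by positivity) hx4 (by linarith)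
        _ = (1 + η ^ 2) ^ (-γ) / 4 ^ (-γ) :=
              Real.div_rpow hz.le (by norm_num : (0:ℝ) ≤ 4) (-γ)
        _ = 4 ^ γ * (1 + η ^ 2) ^ (-γ) := by
              rw [Real.rpow_neg (by norm_num : (0:ℝ) ≤ 4), div_inv_eq_mul]; ring
      have hfA : (1 + u ^ 2) ^ (-γ) * (1 + (η - u) ^ 2)⁻¹ ≤
          (4 ^ γ * (1 + η ^ 2) ^ (-γ)) * (1 + (η - u) ^ 2)⁻¹ :=
        mul_le_mul_of_nonneg_right hstep (by positivity)
      linarith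
  have hnn : ∀ u : ℝ, 0 ≤ (1 + u ^ 2) ^ (-γ) * (1 + (η - u) ^ 2)⁻¹ := fun u => by positivity
  have hsum_int := hgAint.add hgBint
  have hfint : Integrable (fun u : ℝ => (1 + u ^ 2) ^ (-γ) * (1 + (η - u) ^ 2)⁻¹) := by
    refine hsum_int.mono' (my_cont2 γ η).aestronglyMeasurable (ae_of_all _ fun u => ?_)
    rw [Real.norm_eq_abs, abs_of_nonneg (hnn u)]
    exact hpt u
  refine ⟨hfint, ?_⟩
  calc (∫ u : ℝ, (1 + u ^ 2) ^ (-γ) * (1 + (η - u) ^ 2)⁻¹)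
      ≤ ∫ u : ℝ, ((4 ^ γ * (1 + η ^ 2) ^ (-γ)) * (1 + (η - u) ^ 2)⁻¹ +
          (Ioo (-(|η|/2)) (|η|/2)).indicator
            (fun v : ℝ => (4 * (1 + η ^ 2)⁻¹) * (1 + v ^ 2) ^ (-γ)) u) :=
        integral_mono_of_nonneg (ae_of_all _ hnn) hsum_int (ae_of_all _ hpt)
  _ = (∫ u : ℝ, (4 ^ γ * (1 + η ^ 2) ^ (-γ)) * (1 + (η - u) ^ 2)⁻¹) +
      ∫ u : ℝ, (Ioo (-(|η|/2)) (|η|/2)).indicator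
        (fun v : ℝ => (4 * (1 + η ^ 2)⁻¹) * (1 + v ^ 2) ^ (-γ)) u :=
        integral_add hgAint hgBint
  _ = (4 ^ γ * (1 + η ^ 2) ^ (-γ)) * π +
      (4 * (1 + η ^ 2)⁻¹) * ∫ u in Ioo (-(|η|/2)) (|η|/2), (1 + u ^ 2) ^ (-γ) := by
        rw [integral_const_mul, my_cauchy_shift η, integral_indicator measurableSet_Ioo,
          integral_const_mul]
  _ ≤ (4 ^ γ * (1 + η ^ 2) ^ (-γ)) * π + 4 * (K * (1 + η ^ 2) ^ (-γ)) := by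
        have := hJ η
        nlinarith [this]
  _ = (4 ^ γ * π + 4 * K) * (1 + η ^ 2) ^ (-γ) := by ring

lemma my_lower (γ : ℝ) (hγl : -(1/2) < γ) (hγu : γ ≤ 1) (η : ℝ)
    (hfint : Integrable (fun u : ℝ => (1 + u ^ 2) ^ (-γ) * (1 + (η - u) ^ 2)⁻¹)) :
    (1/3 : ℝ) * (1 + η ^ 2) ^ (-γ) ≤
      ∫ u : ℝ, (1 + u ^ 2) ^ (-γ) * (1 + (η - u) ^ 2)⁻¹ := by
  have hz : (0:ℝ) < 1 + η ^ 2 := by positivity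
  have hnn : ∀ u : ℝ, 0 ≤ (1 + u ^ 2) ^ (-γ) * (1 + (η - u) ^ 2)⁻¹ := fun u => by positivity
  have hptlow : ∀ u ∈ Ioo (η - 1) (η + 1),
      (1/6 : ℝ) * (1 + η ^ 2) ^ (-γ) ≤ (1 + u ^ 2) ^ (-γ) * (1 + (η - u) ^ 2)⁻¹ := by
    intro u hu
    have hx : (0:ℝ) < 1 + u ^ 2 := by positivity
    have hd : (η - u) ^ 2 ≤ 1 := by nlinarith [hu.1, hu.2]
    have hyi : (1/2 : ℝ) ≤ (1 + (η - u) ^ 2)⁻¹ := by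
      rw [show (1/2 : ℝ) = (2 : ℝ)⁻¹ by norm_num]
      exact inv_anti₀ (by positivity) (by linarith)
    have hrat : (1/3 : ℝ) * (1 + η ^ 2) ^ (-γ) ≤ (1 + u ^ 2) ^ (-γ) := by
      refine ratio_low hx hz (by linarith) hγu ?_ ?_
      · nlinarith [hu.1, hu.2, sq_nonneg u, sq_nonneg (η - u)]
      · nlinarith [hu.1, hu.2, sq_nonneg η, sq_nonneg (η - u)]
    calc (1/6 : ℝ) * (1 + η ^ 2) ^ (-γ)
        = ((1/3 : ℝ) * (1 + η ^ 2) ^ (-γ)) * (1/2) := by ring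
    _ ≤ (1 + u ^ 2) ^ (-γ) * (1 + (η - u) ^ 2)⁻¹ :=
        mul_le_mul hrat hyi (by norm_num) (Real.rpow_nonneg hx.le _)
  calc (1/3 : ℝ) * (1 + η ^ 2) ^ (-γ)
      = ∫ _u in Ioo (η - 1) (η + 1), (1/6 : ℝ) * (1 + η ^ 2) ^ (-γ) := by
        rw [setIntegral_const, smul_eq_mul, measureReal_def, Real.volume_Ioo,
          show η + 1 - (η - 1) = 2 by ring, ENNReal.toReal_ofReal (by norm_num : (0:ℝ) ≤ 2)]
        ring
  _ ≤ ∫ u in Ioo (η - 1) (η + 1), (1 + u ^ 2) ^ (-γ) * (1 + (η - u) ^ 2)⁻¹ := by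
        refine setIntegral_mono_on ?_ hfint.integrableOn measurableSet_Ioo hptlow
        refine (integrableOn_const_iff enorm_ne_top).mpr (Or.inr ?_)
        rw [Real.volume_Ioo]; exact ENNReal.ofReal_lt_top
  _ ≤ ∫ u : ℝ, (1 + u ^ 2) ^ (-γ) * (1 + (η - u) ^ 2)⁻¹ :=
        setIntegral_le_integral hfint (ae_of_all _ hnn)

/-- For `γ ∈ (-1/2, 1]` there exist `c₁(γ), c₂(γ) > 0` such that for all `η ∈ ℝ`,
`c₁ (1+η²)^{-γ} ≤ ∫_ℝ (1+u²)^{-γ} (1+(η-u)²)^{-1} du ≤ c₂ (1+η²)^{-γ}`. -/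
theorem stmt_3 (γ : ℝ) (hγ : γ ∈ Set.Ioc (-(1/2) : ℝ) 1) :
    ∃ c₁ c₂ : ℝ, 0 < c₁ ∧ 0 < c₂ ∧ ∀ η : ℝ,
      c₁ * (1 + η ^ 2) ^ (-γ) ≤
        (∫ u : ℝ, (1 + u ^ 2) ^ (-γ) * (1 + (η - u) ^ 2)⁻¹) ∧
      (∫ u : ℝ, (1 + u ^ 2) ^ (-γ) * (1 + (η - u) ^ 2)⁻¹) ≤
        c₂ * (1 + η ^ 2) ^ (-γ) := by
  obtain ⟨hγl, hγu⟩ := hγ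
  have hupper : ∃ C : ℝ, 0 < C ∧ ∀ η : ℝ,
      Integrable (fun u : ℝ => (1 + u ^ 2) ^ (-γ) * (1 + (η - u) ^ 2)⁻¹) ∧
      (∫ u : ℝ, (1 + u ^ 2) ^ (-γ) * (1 + (η - u) ^ 2)⁻¹) ≤ C * (1 + η ^ 2) ^ (-γ) := by
    rcases lt_or_ge γ (1/2) with hhalf | hhalf
    · exact my_upper_low γ hγl hhalf
    · exact my_upper_high γ hγu hhalf
  obtain ⟨C, hC, hup⟩ := hupper
  refine ⟨1/3, C, by norm_num, hC, fun η => ?_⟩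
  obtain ⟨hfint, hle⟩ := hup η
  exact ⟨my_lower γ hγl hγu η hfint, hle⟩
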